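/- Let n ≥ 1 and let v₁, …, vₙ : ℝ → ℝ be continuous functions with vᵢ(0) = 0 for all i such that vₙ is non-linear (there is no constant c with vₙ(u) = c·u for all u). Then the subgroup of the permutation group of ℝ × ℝ generated by all left translations λ_a and all right translations ρ_a of ∗ (over all a ∈ ℝ × ℝ) equals the group Mₙ if and only if there exist continuous functions s₁, …, sₙ : ℝ → ℝ such that for all x, u ∈ ℝ: −x·s₁(u) + x²·s₂(u) + ⋯ + (−1)ⁿ·xⁿ·sₙ(u) − x·v₁(u) + x²·v₂(u) + ⋯ + (−1)ⁿ·xⁿ·vₙ(u) = −u·v₁(x) + u²·v₂(x) − u³·v₃(x) + ⋯ + (−1)ⁿ·uⁿ·vₙ(x). -/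

import Mathlib

open Polynomial Finset

namespace Stmt15

noncomputable section

def vshear (c : ℝ) (q : ℝ → ℝ) : Equiv.Perm (ℝ × ℝ) where
  toFun z := (z.1 + c, z.2 + q z.1)
  invFun z := (z.1 - c, z.2 - q (z.1 - c))
  left_inv z := by simp
  right_inv z := by simp

@[simp] lemma vshear_apply (c : ℝ) (q : ℝ → ℝ) (z : ℝ × ℝ) :
    vshear c q z = (z.1 + c, z.2 + q z.1) := rfl

variable {n : ℕ}

/-- `Fv v x u = ∑ (-1)^(k+1) x^(k+1) v_k(u)`. -/
def Fv (v : Fin n → ℝ → ℝ) (x u : ℝ) : ℝ :=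
  ∑ k : Fin n, (-1:ℝ)^((k:ℕ)+1) * x^((k:ℕ)+1) * v k u

def mulF (v : Fin n → ℝ → ℝ) (a b : ℝ × ℝ) : ℝ × ℝ :=
  (a.1 + b.1, a.2 + b.2 + Fv v b.1 a.1)

lemma Fv_zero_right (v : Fin n → ℝ → ℝ) (hv0 : ∀ i, v i 0 = 0) (x : ℝ) :
    Fv v x 0 = 0 := by
  simp [Fv, hv0]

def Pw (w : Fin n → ℝ) : ℝ[X] :=
  ∑ k : Fin n, C ((-1:ℝ)^((k:ℕ)+1) * w k) * X^((k:ℕ)+1)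

lemma Pw_eval (w : Fin n → ℝ) (x : ℝ) :
    (Pw w).eval x = ∑ k : Fin n, (-1:ℝ)^((k:ℕ)+1) * x^((k:ℕ)+1) * w k := by
  rw [Pw, Polynomial.eval_finset_sum]
  exact Finset.sum_congr rfl fun k _ => by simp; ring

lemma Pw_eval_Fv (v : Fin n → ℝ → ℝ) (u x : ℝ) :
    (Pw (fun k => v k u)).eval x = Fv v x u :=
  Pw_eval _ x

lemma Pw_natDegree_le (w : Fin n → ℝ) : (Pw w).natDegree ≤ n := by
  apply Polynomial.natDegree_sum_le_of_forall_le
  intro k _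
  calc (C ((-1:ℝ)^((k:ℕ)+1) * w k) * X^((k:ℕ)+1)).natDegree
      ≤ (X^((k:ℕ)+1) : ℝ[X]).natDegree := natDegree_C_mul_le _ _
    _ ≤ n := by rw [natDegree_X_pow]; omega

lemma Pw_coeff_top (hn : 1 ≤ n) (w : Fin n → ℝ) :
    (Pw w).coeff n = (-1:ℝ)^n * w ⟨n-1, Nat.sub_lt hn Nat.one_pos⟩ := by
  rw [Pw, finset_sum_coeff]
  rw [Finset.sum_eq_single (⟨n-1, Nat.sub_lt hn Nat.one_pos⟩ : Fin n)]
  · simp only [coeff_C_mul, coeff_X_pow]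
    have : n - 1 + 1 = n := by omega
    rw [this]
    simp
  · intro k _ hk
    simp only [coeff_C_mul, coeff_X_pow]
    have : ¬ (n = (k:ℕ)+1) := by
      intro h
      apply hk
      apply Fin.ext
      simp [← h]
      omega
    simp [this]
  · intro h; exact absurd (Finset.mem_univ _) h

lemma coeff_comp_shift (p : ℝ[X]) (c : ℝ) {N : ℕ} (hp : p.natDegree < N) (m : ℕ) :
    (p.comp (X + C c)).coeff m
      = ∑ j ∈ Finset.range N, p.coeff j * (c^(j-m) * (j.choose m)) := by
  conv_lhs => rw [p.as_sum_range' N hp]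
  rw [Polynomial.comp, Polynomial.eval₂_finset_sum, finset_sum_coeff]
  apply Finset.sum_congr rfl
  intro j _
  simp [coeff_C_mul, coeff_X_add_C_pow]

lemma coeff_comp_X_add_C_eq {p : ℝ[X]} {m : ℕ} (hp : p.natDegree ≤ m) (c : ℝ) :
    (p.comp (X + C c)).coeff m = p.coeff m := by
  rw [coeff_comp_shift p c (show p.natDegree < m+1 by omega) m, Finset.sum_eq_single m]
  · simp
  · intro j hj hjm
    have : j < m := by have := Finset.mem_range.mp hj; omega
    simp [Nat.choose_eq_zero_of_lt this]
  · intro h; exact absurd (Finset.mem_range.mpr (by omega)) h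

lemma natDegree_comp_X_add_C (p : ℝ[X]) (c : ℝ) :
    (p.comp (X + C c)).natDegree = p.natDegree := by
  rw [← Polynomial.taylor_apply, Polynomial.natDegree_taylor]

lemma coeff_comp_shift_sub {p : ℝ[X]} {m : ℕ} (hm : 1 ≤ m) (hp : p.natDegree ≤ m) (c : ℝ) :
    (p.comp (X + C c) - p).coeff (m-1) = (m : ℝ) * c * p.coeff m := by
  rw [coeff_sub, coeff_comp_shift p c (show p.natDegree < m+1 by omega) (m-1),
    Finset.sum_range_succ, Finset.sum_eq_single (m-1)]
  · have h2 : (m-1) - (m-1) = 0 := by omega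
    have h3 : m - (m-1) = 1 := by omega
    rw [h2, h3, Nat.choose_self,
      show m.choose (m-1) = m from (Nat.choose_symm (by omega : 1 ≤ m)).trans (Nat.choose_one_right m)]
    push_cast
    ring
  · intro j hj hjm
    have : j < m - 1 := by have := Finset.mem_range.mp hj; omega
    simp [Nat.choose_eq_zero_of_lt this]
  · intro h
    exact absurd (Finset.mem_range.mpr (by omega)) h

lemma forward (n : ℕ) (hn : 1 ≤ n) (v : Fin n → ℝ → ℝ) (hv0 : ∀ i, v i 0 = 0)
    (hvc : ∀ i, Continuous (v i))
    (hM : ∀ u : ℝ, ∃ p : ℝ[X], p.natDegree ≤ n ∧ ∀ x, Fv v u x = p.eval x) :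
    ∃ s : Fin n → ℝ → ℝ, (∀ k, Continuous (s k)) ∧
      ∀ x u : ℝ,
        (∑ k : Fin n, (-1 : ℝ) ^ ((k : ℕ) + 1) * x ^ ((k : ℕ) + 1) * s k u) +
          (∑ k : Fin n, (-1 : ℝ) ^ ((k : ℕ) + 1) * x ^ ((k : ℕ) + 1) * v k u) =
        ∑ k : Fin n, (-1 : ℝ) ^ ((k : ℕ) + 1) * u ^ ((k : ℕ) + 1) * v k x := by
  classical
  set ν : Fin (n+1) → ℝ := fun j => (j : ℝ) with hν
  have hinj : Set.InjOn ν (Finset.univ : Finset (Fin (n+1))) := by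
    intro a _ b _ hab
    have : ((a : ℕ) : ℝ) = ((b : ℕ) : ℝ) := hab
    exact Fin.ext (Nat.cast_injective this)
  set P : ℝ → ℝ[X] := fun u => Lagrange.interpolate Finset.univ ν (fun j => Fv v u (ν j)) with hP
  have hcard : ((Finset.univ : Finset (Fin (n+1))).card : WithBot ℕ) = ((n+1 : ℕ) : WithBot ℕ) := by
    rw [Finset.card_univ, Fintype.card_fin]
  have hPeq : ∀ u, ∀ x, (P u).eval x = Fv v u x := by
    intro u
    obtain ⟨p, hdeg, hp⟩ := hM u
    have hdlt : p.degree < (Finset.univ : Finset (Fin (n+1))).card := by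
      rw [hcard]
      calc p.degree ≤ (n : WithBot ℕ) := natDegree_le_iff_degree_le.mp hdeg
        _ < ((n+1:ℕ) : WithBot ℕ) := by exact_mod_cast Nat.lt_succ_self n
    have : p = P u := by
      rw [hP]
      exact Lagrange.eq_interpolate_of_eval_eq _ hinj hdlt (fun j _ => (hp (ν j)).symm)
    intro x; rw [← this, hp]
  have hPdeg : ∀ u, (P u).natDegree ≤ n := by
    intro u
    have := Lagrange.degree_interpolate_lt (fun j => Fv v u (ν j)) hinj
    rw [hcard] at this
    rcases eq_or_ne (P u) 0 with h | h
    · simp [h]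
    · have := (Polynomial.natDegree_lt_iff_degree_lt h).mpr this
      omega
  have hP0 : ∀ u, (P u).coeff 0 = 0 := by
    intro u
    rw [Polynomial.coeff_zero_eq_eval_zero, hPeq u 0]
    simp [Fv, hv0]
  have main : ∀ x u : ℝ,
      (∑ k : Fin n, (-1 : ℝ) ^ ((k : ℕ) + 1) * x ^ ((k : ℕ) + 1) *
          ((-1:ℝ)^((k:ℕ)+1) * (P u).coeff ((k:ℕ)+1) - v k u)) +
        (∑ k : Fin n, (-1 : ℝ) ^ ((k : ℕ) + 1) * x ^ ((k : ℕ) + 1) * v k u) =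
      ∑ k : Fin n, (-1 : ℝ) ^ ((k : ℕ) + 1) * u ^ ((k : ℕ) + 1) * v k x := by
    intro x u
    have key : ∀ k : Fin n,
        (-1:ℝ)^((k:ℕ)+1) * x^((k:ℕ)+1) * ((-1:ℝ)^((k:ℕ)+1) * (P u).coeff ((k:ℕ)+1) - v k u)
          + (-1:ℝ)^((k:ℕ)+1) * x^((k:ℕ)+1) * v k u
        = (P u).coeff ((k:ℕ)+1) * x^((k:ℕ)+1) := by
      intro k
      have h1 : ((-1:ℝ)^((k:ℕ)+1)) * ((-1:ℝ)^((k:ℕ)+1)) = 1 := by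
        rw [← pow_add]
        exact Even.neg_one_pow ⟨(k:ℕ)+1, rfl⟩
      linear_combination (x^((k:ℕ)+1) * (P u).coeff ((k:ℕ)+1)) * h1
    rw [← Finset.sum_add_distrib, Finset.sum_congr rfl (fun k _ => key k)]
    have hev : (P u).eval x = ∑ j ∈ Finset.range (n+2), (P u).coeff j * x ^ j := by
      apply Polynomial.eval_eq_sum_range'
      have := hPdeg u; omega
    have hsum : ∑ k : Fin n, (P u).coeff ((k:ℕ)+1) * x^((k:ℕ)+1) = (P u).eval x := by
      rw [hev, Finset.sum_range_succ', Finset.sum_range_succ,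
        Polynomial.coeff_eq_zero_of_natDegree_lt (show (P u).natDegree < n+1 by
          have := hPdeg u; omega), hP0]
      simp [← Finset.sum_range fun j => (P u).coeff (j+1) * x^(j+1)]
    rw [hsum, hPeq u x]
    rfl
  exact ⟨fun k u => (-1:ℝ)^((k:ℕ)+1) * (P u).coeff ((k:ℕ)+1) - v k u, fun k => by
    have hc : Continuous (fun u => (P u).coeff ((k:ℕ)+1)) := by
      have : (fun u => (P u).coeff ((k:ℕ)+1)) =
          fun u => ∑ j : Fin (n+1), Fv v u (ν j) * (Lagrange.basis Finset.univ ν j).coeff ((k:ℕ)+1) := by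
        funext u
        rw [hP]
        simp only [Lagrange.interpolate_apply, Polynomial.finset_sum_coeff, Polynomial.coeff_C_mul]
      rw [this]
      apply continuous_finset_sum
      intro j _
      apply Continuous.mul _ continuous_const
      apply continuous_finset_sum
      exact fun i _ => (continuous_const.mul (continuous_pow _)).mul continuous_const
    exact (continuous_const.mul hc).sub (hvc k), main⟩

lemma backward (n : ℕ) (hn : 1 ≤ n) (v : Fin n → ℝ → ℝ) (hv0 : ∀ i, v i 0 = 0)
    (hwc : Continuous (v ⟨n-1, Nat.sub_lt hn Nat.one_pos⟩))
    (hvnl : ¬∃ c : ℝ, ∀ u : ℝ, v ⟨n - 1, Nat.sub_lt hn Nat.one_pos⟩ u = c * u)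
    (s : Fin n → ℝ → ℝ)
    (hs : ∀ x u : ℝ, Fv s x u + Fv v x u = Fv v u x) :
    ((Subgroup.closure
        ({f : Equiv.Perm (ℝ × ℝ) | ∃ a : ℝ × ℝ, ∀ x, f x = mulF v a x} ∪
          {f : Equiv.Perm (ℝ × ℝ) | ∃ a : ℝ × ℝ, ∀ x, f x = mulF v x a}) :
        Subgroup (Equiv.Perm (ℝ × ℝ))) : Set (Equiv.Perm (ℝ × ℝ))) =
      {f : Equiv.Perm (ℝ × ℝ) | ∃ c : ℝ, ∃ p : ℝ[X], p.natDegree ≤ n ∧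
        ∀ x y : ℝ, f (x, y) = (x + c, y + p.eval x)} := by
  classical
  set G := Subgroup.closure
      ({f : Equiv.Perm (ℝ × ℝ) | ∃ a : ℝ × ℝ, ∀ x, f x = mulF v a x} ∪
        {f : Equiv.Perm (ℝ × ℝ) | ∃ a : ℝ × ℝ, ∀ x, f x = mulF v x a}) with hG
  -- the basic translations
  set lamP : ℝ × ℝ → Equiv.Perm (ℝ × ℝ) :=
      fun a => vshear a.1 (fun x => a.2 + Fv v x a.1) with hlamP
  set rhoP : ℝ × ℝ → Equiv.Perm (ℝ × ℝ) :=
      fun a => vshear a.1 (fun x => a.2 + Fv v a.1 x) with hrhoP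
  have hlam_mem : ∀ a, lamP a ∈ G := by
    intro a
    apply Subgroup.subset_closure
    left
    refine ⟨a, fun z => ?_⟩
    simp only [hlamP, vshear_apply, mulF]
    exact Prod.ext (by ring) (by ring)
  have hrho_mem : ∀ a, rhoP a ∈ G := by
    intro a
    apply Subgroup.subset_closure
    right
    refine ⟨a, fun z => ?_⟩
    simp only [hrhoP, vshear_apply, mulF]
    exact Prod.ext (by ring) (by ring)
  -- membership of vertical shears by polynomials
  set W : AddSubgroup ℝ[X] :=
    { carrier := {p | vshear 0 (fun x => p.eval x) ∈ G}
      zero_mem' := by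
        have h1 : vshear 0 (fun x => (0:ℝ[X]).eval x) = 1 := by
          apply Equiv.ext
          intro z
          simp [vshear_apply]
        simp only [Set.mem_setOf_eq, h1]
        exact one_mem G
      add_mem' := by
        intro p q hp hq
        simp only [Set.mem_setOf_eq] at *
        have h1 : vshear 0 (fun x => p.eval x) * vshear 0 (fun x => q.eval x)
            = vshear 0 (fun x => (p + q).eval x) := by
          apply Equiv.ext
          intro z
          simp only [Equiv.Perm.mul_apply, vshear_apply, eval_add]
          exact Prod.ext (by ring) (by ring)
        rw [← h1]
        exact mul_mem hp hq
      neg_mem' := by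
        intro p hp
        simp only [Set.mem_setOf_eq] at *
        have h1 : vshear 0 (fun x => (-p).eval x) * vshear 0 (fun x => p.eval x) = 1 := by
          apply Equiv.ext
          intro z
          simp only [Equiv.Perm.mul_apply, vshear_apply, eval_neg]
          have : z.2 + eval z.1 p + -eval (z.1 + 0) p = z.2 := by
            rw [add_zero]; ring
          rw [add_zero, add_zero]
          ext <;> simp
        have h2 : vshear 0 (fun x => (-p).eval x) = (vshear 0 (fun x => p.eval x))⁻¹ :=
          eq_inv_of_mul_eq_one_left h1
        rw [h2]
        exact inv_mem hp } with hW
  have hWmem : ∀ p : ℝ[X], p ∈ W ↔ vshear 0 (fun x => p.eval x) ∈ G := fun p => Iff.rfl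
  -- constants are in W
  have hconst : ∀ b : ℝ, (C b : ℝ[X]) ∈ W := by
    intro b
    rw [hWmem]
    have h1 : vshear 0 (fun x => (C b : ℝ[X]).eval x) = lamP (0, b) := by
      apply Equiv.ext
      intro z
      simp only [hlamP, vshear_apply, eval_C]
      exact Prod.ext rfl (by rw [Fv_zero_right v hv0]; ring)
    rw [h1]
    exact hlam_mem _
  -- the s-polynomials are in W
  have hspoly : ∀ a : ℝ, Pw (fun k => s k a) ∈ W := by
    intro a
    rw [hWmem]
    have h1 : lamP (a, 0) * vshear 0 (fun x => (Pw (fun k => s k a)).eval x) = rhoP (a, 0) := by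
      apply Equiv.ext
      intro z
      simp only [hlamP, hrhoP, Equiv.Perm.mul_apply, vshear_apply, Pw_eval_Fv]
      refine Prod.ext (by simp) ?_
      simp only [add_zero, zero_add, Pw_eval_Fv]
      rw [add_assoc, hs z.1 a]
    have h2 : vshear 0 (fun x => (Pw (fun k => s k a)).eval x) = (lamP (a,0))⁻¹ * rhoP (a,0) := by
      rw [← h1, inv_mul_cancel_left]
    rw [h2]
    exact mul_mem (inv_mem (hlam_mem _)) (hrho_mem _)
  -- the additivity-defect polynomials are in W
  have hdefect : ∀ a b : ℝ,
      (Pw (fun k => v k a) + (Pw (fun k => v k b)).comp (X + C a) - Pw (fun k => v k (a+b))) ∈ W := by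
    intro a b
    rw [hWmem]
    set D : ℝ[X] :=
      Pw (fun k => v k a) + (Pw (fun k => v k b)).comp (X + C a) - Pw (fun k => v k (a+b)) with hD
    have hDev : ∀ x : ℝ, D.eval x = Fv v x a + Fv v (x+a) b - Fv v x (a+b) := by
      intro x
      rw [hD]
      simp only [eval_sub, eval_add, eval_comp, eval_X, eval_C, Pw_eval_Fv]
    have h1 : lamP (a+b, 0) * vshear 0 (fun x => D.eval x) = lamP (b,0) * lamP (a,0) := by
      apply Equiv.ext
      intro z
      simp only [hlamP, Equiv.Perm.mul_apply, vshear_apply, hDev]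
      exact Prod.ext (by simp; ring) (by simp; ring)
    have h2 : vshear 0 (fun x => D.eval x) = (lamP (a+b,0))⁻¹ * (lamP (b,0) * lamP (a,0)) := by
      rw [← h1, inv_mul_cancel_left]
    rw [h2]
    exact mul_mem (inv_mem (hlam_mem _)) (mul_mem (hlam_mem _) (hlam_mem _))
  -- W is closed under composition with X + C c
  have hshift : ∀ p ∈ W, ∀ c : ℝ, p.comp (X + C c) ∈ W := by
    intro p hp c
    rw [hWmem]
    have h1 : vshear 0 (fun x => (p.comp (X + C c)).eval x) * lamP (-c, 0)
        = lamP (-c, 0) * vshear 0 (fun x => p.eval x) := by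
      apply Equiv.ext
      intro z
      simp only [hlamP, Equiv.Perm.mul_apply, vshear_apply, eval_comp, eval_add, eval_X, eval_C]
      refine Prod.ext (by simp) ?_
      simp only [add_zero, zero_add]
      have harg : z.1 + -c + c = z.1 := by ring
      rw [harg]
      ring
    have h2 : vshear 0 (fun x => (p.comp (X + C c)).eval x)
        = lamP (-c, 0) * vshear 0 (fun x => p.eval x) * (lamP (-c, 0))⁻¹ := by
      rw [← h1, mul_inv_cancel_right]
    rw [h2]
    exact mul_mem (mul_mem (hlam_mem _) hp) (inv_mem (hlam_mem _))
  -- the coefficient subgroups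
  set Cl : ℕ → AddSubgroup ℝ := fun m =>
    { carrier := {β | ∃ p ∈ W, p.natDegree ≤ m ∧ p.coeff m = β}
      zero_mem' := ⟨0, zero_mem W, by simp⟩
      add_mem' := by
        rintro β γ ⟨p, hp, hpd, hpc⟩ ⟨q, hq, hqd, hqc⟩
        exact ⟨p + q, add_mem hp hq,
          le_trans (natDegree_add_le _ _) (max_le hpd hqd), by rw [coeff_add, hpc, hqc]⟩
      neg_mem' := by
        rintro β ⟨p, hp, hpd, hpc⟩
        exact ⟨-p, neg_mem hp, by simpa using hpd, by rw [coeff_neg, hpc]⟩ } with hCl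
  -- the top coefficient subgroup is everything
  set w : ℝ → ℝ := v ⟨n-1, Nat.sub_lt hn Nat.one_pos⟩ with hw
  have hdefect_top : ∀ a b : ℝ, (-1:ℝ)^n * (w a + w b - w (a+b)) ∈ Cl n := by
    intro a b
    refine ⟨_, hdefect a b, ?_, ?_⟩
    · refine le_trans (natDegree_sub_le _ _) (max_le (le_trans (natDegree_add_le _ _)
        (max_le (Pw_natDegree_le _) ?_)) (Pw_natDegree_le _))
      rw [natDegree_comp_X_add_C]
      exact Pw_natDegree_le _
    · rw [coeff_sub, coeff_add, coeff_comp_X_add_C_eq (Pw_natDegree_le _),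
        Pw_coeff_top hn, Pw_coeff_top hn, Pw_coeff_top hn]
      ring
  have hCln : Cl n = ⊤ := by
    -- find a point with nonzero additivity defect
    have hδ : ∃ a b : ℝ, w a + w b - w (a+b) ≠ 0 := by
      by_contra hcon
      push_neg at hcon
      have hadd : ∀ a b : ℝ, w (a + b) = w a + w b := by
        intro a b
        have := hcon a b
        linarith [hcon a b]
      set φ : ℝ →+ ℝ := AddMonoidHom.mk' w hadd with hφ
      have hlin := AddMonoidHom.toRealLinearMap φ hwc
      apply hvnl
      refine ⟨w 1, fun u => ?_⟩
      have h0 : (AddMonoidHom.toRealLinearMap φ hwc) (u • (1:ℝ))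
          = u • (AddMonoidHom.toRealLinearMap φ hwc) 1 := map_smul _ u 1
      have h2 : w u = u * w 1 := by simpa [hφ, smul_eq_mul] using h0
      rw [h2]; ring
    obtain ⟨a₀, b₀, hδ⟩ := hδ
    set φf : ℝ → ℝ := fun t => (-1:ℝ)^n * (w (t*a₀) + w (t*b₀) - w (t*(a₀+b₀))) with hφf
    have hφf_cont : Continuous φf := by
      apply continuous_const.mul
      exact ((hwc.comp (continuous_id.mul continuous_const)).add
        (hwc.comp (continuous_id.mul continuous_const))).sub
        (hwc.comp (continuous_id.mul continuous_const))
    have hφf0 : φf 0 = 0 := by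
      simp only [hφf, zero_mul]
      rw [show w 0 = 0 from hv0 _]
      ring
    have hφf_mem : ∀ t, φf t ∈ Cl n := by
      intro t
      have := hdefect_top (t*a₀) (t*b₀)
      have harg : t*a₀ + t*b₀ = t*(a₀+b₀) := by ring
      rw [harg] at this
      exact this
    have hφf1 : φf 1 ≠ 0 := by
      simp only [hφf, one_mul]
      intro hcon
      rcases mul_eq_zero.mp hcon with h | h
      · exact absurd h (pow_ne_zero _ (by norm_num))
      · exact hδ h
    -- an interval inside Cl n
    have hIcc : ∀ x : ℝ, x ∈ Set.Icc 0 |φf 1| → x ∈ Cl n := by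
      intro x hx
      have himage := intermediate_value_uIcc (hφf_cont.continuousOn :
        ContinuousOn φf (Set.uIcc 0 1))
      rcases le_or_gt 0 (φf 1) with hsgn | hsgn
      · have : x ∈ Set.uIcc (φf 0) (φf 1) := by
          rw [hφf0, Set.uIcc_of_le hsgn]
          exact ⟨hx.1, by rw [abs_of_nonneg hsgn] at hx; exact hx.2⟩
        obtain ⟨t, _, ht⟩ := himage this
        exact ht ▸ hφf_mem t
      · have : -x ∈ Set.uIcc (φf 0) (φf 1) := by
          rw [hφf0, Set.uIcc_of_ge (le_of_lt hsgn)]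
          constructor
          · rw [abs_of_neg hsgn] at hx
            linarith [hx.2]
          · linarith [hx.1]
        obtain ⟨t, _, ht⟩ := himage this
        have : -x ∈ Cl n := ht ▸ hφf_mem t
        simpa using neg_mem this
    -- conclude Cl n = ⊤
    rw [eq_top_iff]
    intro β _
    have hε : (0:ℝ) < |φf 1| := abs_pos.mpr hφf1
    obtain ⟨N, hN⟩ := exists_nat_ge (|β| / |φf 1|)
    have hNpos : (0:ℝ) < N + 1 := by positivity
    have hβN : |β / (N+1)| ≤ |φf 1| := by
      rw [abs_div]
      rw [div_le_iff₀ (by positivity : (0:ℝ) < |(N:ℝ)+1|)]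
      have h1 : |β| / |φf 1| ≤ N + 1 := by linarith
      have h2 : |((N:ℝ)+1)| = (N:ℝ)+1 := abs_of_pos hNpos
      rw [h2]
      calc |β| ≤ (|β| / |φf 1|) * |φf 1| := by
            rw [div_mul_cancel₀]; exact ne_of_gt hε
        _ ≤ ((N:ℝ)+1) * |φf 1| := by
            apply mul_le_mul_of_nonneg_right _ (le_of_lt hε)
            linarith
        _ = |φf 1| * ((N:ℝ)+1) := by ring
    have hγ : β / (N+1) ∈ Cl n := by
      rcases le_or_gt 0 (β / (N+1)) with h | h
      · exact hIcc _ ⟨h, by rwa [abs_of_nonneg h] at hβN⟩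
      · have : -(β / (N+1)) ∈ Cl n := by
          apply hIcc
          constructor
          · linarith
          · rw [abs_of_neg h] at hβN; linarith
        simpa using neg_mem this
    have : (N+1) • (β / (N+1)) ∈ Cl n := AddSubgroup.nsmul_mem _ hγ (N+1)
    have heq : (N+1) • (β / (N+1)) = β := by
      rw [nsmul_eq_mul]
      push_cast
      field_simp
    rwa [heq] at this
  -- all coefficient subgroups up to n are everything
  have hClm : ∀ j : ℕ, j ≤ n → Cl (n - j) = ⊤ := by
    intro j
    induction j with
    | zero => intro _; simpa using hCln
    | succ j ih =>
      intro hj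
      have hprev := ih (by omega)
      have hm : 1 ≤ n - j := by omega
      rw [eq_top_iff]
      intro β _
      have h1 : (1:ℝ) ∈ Cl (n - j) := hprev ▸ AddSubgroup.mem_top 1
      obtain ⟨p, hp, hpd, hpc⟩ := h1
      set m := n - j with hm'
      set c : ℝ := β / m with hc
      have hmem : p.comp (X + C c) - p ∈ W := sub_mem (hshift p hp c) hp
      refine ⟨p.comp (X + C c) - p, hmem, ?_, ?_⟩
      · rw [natDegree_le_iff_coeff_eq_zero]
        intro N hN
        rcases Nat.lt_or_ge N (m+1) with hNm | hNm
        · have hNm' : N = m := by omega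
          rw [hNm', coeff_sub, coeff_comp_X_add_C_eq hpd, sub_self]
        · rw [coeff_sub, coeff_eq_zero_of_natDegree_lt, coeff_eq_zero_of_natDegree_lt, sub_self]
          · omega
          · rw [natDegree_comp_X_add_C]; omega
      · have := coeff_comp_shift_sub hm hpd c
        rw [show n - (j+1) = m - 1 by omega, this, hpc, hc]
        field_simp
  -- every polynomial of degree at most n is in W
  have hWfull : ∀ m : ℕ, m ≤ n → ∀ p : ℝ[X], p.natDegree ≤ m → p ∈ W := by
    intro m
    induction m with
    | zero =>
      intro _ p hp
      rw [Polynomial.eq_C_of_natDegree_le_zero hp]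
      exact hconst _
    | succ m ih =>
      intro hmn p hp
      have h1 : Cl (m+1) = ⊤ := by
        have := hClm (n - (m+1)) (by omega)
        rwa [show n - (n - (m+1)) = m + 1 by omega] at this
      have h2 : p.coeff (m+1) ∈ Cl (m+1) := h1 ▸ AddSubgroup.mem_top _
      obtain ⟨q, hq, hqd, hqc⟩ := h2
      have h3 : (p - q).natDegree ≤ m := by
        rw [natDegree_le_iff_coeff_eq_zero]
        intro N hN
        rcases Nat.lt_or_ge N (m+2) with hNm | hNm
        · have : N = m+1 := by omega
          rw [this, coeff_sub, hqc, sub_self]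
        · rw [coeff_sub, coeff_eq_zero_of_natDegree_lt (by omega),
            coeff_eq_zero_of_natDegree_lt (by omega), sub_self]
      have h4 : p - q ∈ W := ih (by omega) _ h3
      have h5 : p = (p - q) + q := by ring
      rw [h5]
      exact add_mem h4 hq
  -- final set equality
  apply Set.Subset.antisymm
  · -- closure ⊆ M
    set MH : Subgroup (Equiv.Perm (ℝ × ℝ)) :=
      { carrier := {f : Equiv.Perm (ℝ × ℝ) | ∃ c : ℝ, ∃ p : ℝ[X], p.natDegree ≤ n ∧
          ∀ x y : ℝ, f (x, y) = (x + c, y + p.eval x)}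
        one_mem' := ⟨0, 0, by simp, fun x y => by simp⟩
        mul_mem' := by
          rintro f g ⟨cf, pf, hpf, hf⟩ ⟨cg, pg, hpg, hg⟩
          refine ⟨cg + cf, pg + pf.comp (X + C cg), ?_, ?_⟩
          · refine le_trans (natDegree_add_le _ _) (max_le hpg ?_)
            rw [natDegree_comp_X_add_C]; exact hpf
          · intro x y
            have : (f * g) (x, y) = f (g (x, y)) := rfl
            rw [this, hg, hf]
            simp only [eval_add, eval_comp, eval_X, eval_C]
            exact Prod.ext (by simp; ring) (by simp; ring)
        inv_mem' := by
          rintro f ⟨c, p, hp, hf⟩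
          refine ⟨-c, -(p.comp (X + C (-c))), ?_, ?_⟩
          · rw [natDegree_neg, natDegree_comp_X_add_C]; exact hp
          · intro x y
            have hfwd : f (x - c, y - p.eval (x - c)) = (x, y) := by
              rw [hf]
              exact Prod.ext (by simp) (by simp)
            have : f⁻¹ (x, y) = (x - c, y - p.eval (x - c)) := by
              rw [Equiv.Perm.inv_def, Equiv.symm_apply_eq]
              exact hfwd.symm
            rw [this]
            simp only [eval_neg, eval_comp, eval_add, eval_X, eval_C]
            exact Prod.ext (by ring) (by rw [show x + -c = x - c by ring]; ring) } with hMH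
    have hle : G ≤ MH := by
      rw [hG]
      apply (Subgroup.closure_le MH).mpr
      rintro f (⟨a, hf⟩ | ⟨a, hf⟩)
      · refine ⟨a.1, C a.2 + Pw (fun k => v k a.1), ?_, ?_⟩
        · refine le_trans (natDegree_add_le _ _) (max_le ?_ (Pw_natDegree_le _))
          exact le_trans (natDegree_C _).le (by omega)
        · intro x y
          rw [hf (x, y)]
          simp only [mulF, eval_add, eval_C, Pw_eval_Fv]
          exact Prod.ext (by simp; ring) (by simp; ring)
      · refine ⟨a.1, C a.2 + Pw (fun k => s k a.1 + v k a.1), ?_, ?_⟩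
        · refine le_trans (natDegree_add_le _ _) (max_le ?_ (Pw_natDegree_le _))
          exact le_trans (natDegree_C _).le (by omega)
        · intro x y
          rw [hf (x, y)]
          simp only [mulF, eval_add, eval_C, Pw_eval]
          refine Prod.ext (by simp) ?_
          have hsplit : ∑ k : Fin n, (-1:ℝ)^((k:ℕ)+1) * x^((k:ℕ)+1) * (s k a.1 + v k a.1)
              = Fv s x a.1 + Fv v x a.1 := by
            rw [Fv, Fv, ← Finset.sum_add_distrib]
            exact Finset.sum_congr rfl fun k _ => by ring
          rw [hsplit, hs x a.1]
          simp
          ring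
    exact fun f hf => hle hf
  · -- M ⊆ closure
    rintro f ⟨c, p, hp, hf⟩
    set q : ℝ[X] := (p - Pw (fun k => v k c)).comp (X + C (-c)) with hq
    have hqW : q ∈ W := by
      apply hshift
      · exact sub_mem (hWfull n le_rfl p hp) (hWfull n le_rfl _ (Pw_natDegree_le _))
    have hfeq : f = vshear 0 (fun x => q.eval x) * lamP (c, 0) := by
      apply Equiv.ext
      intro z
      have hz : f z = (z.1 + c, z.2 + p.eval z.1) := by
        have := hf z.1 z.2
        rwa [Prod.mk.eta] at this
      rw [hz]
      simp only [Equiv.Perm.mul_apply, hlamP, vshear_apply, hq]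
      simp only [eval_comp, eval_sub, eval_add, eval_X, eval_C, Pw_eval_Fv]
      have harg : z.1 + c + -c = z.1 := by ring
      rw [harg]
      exact Prod.ext (by simp) (by simp)
    rw [hfeq]
    exact mul_mem (hqW) (hlam_mem _)

end

end Stmt15

/-- Let `n ≥ 1` and let `v₁, …, vₙ : ℝ → ℝ` be continuous with `vᵢ(0) = 0` and `vₙ`
non-linear, with the loop operation `∗` on `ℝ × ℝ` given by
`(u₁,z₁) ∗ (u₂,z₂) = (u₁+u₂, z₁+z₂ − u₂ v₁(u₁) + ⋯ + (−1)ⁿ u₂ⁿ vₙ(u₁))`.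
The subgroup of `Perm (ℝ × ℝ)` generated by all left and right translations of
`∗` equals the group `Mₙ` of all permutations `(x, y) ↦ (x + c, y + p(x))` with
`c ∈ ℝ` and `p` a polynomial of degree at most `n`, iff there are continuous
functions `s₁, …, sₙ : ℝ → ℝ` with
`Σ_{k=1}^n (−1)ᵏ xᵏ sₖ(u) + Σ_{k=1}^n (−1)ᵏ xᵏ vₖ(u) = Σ_{k=1}^n (−1)ᵏ uᵏ vₖ(x)`
for all `x, u ∈ ℝ` (one-based `(−1)ᵏ` appears zero-indexed as `(−1)^{k₀+1}`). -/
theorem stmt15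
    (n : ℕ) (hn : 1 ≤ n)
    (v : Fin n → ℝ → ℝ) (hv0 : ∀ i, v i 0 = 0) (hvc : ∀ i, Continuous (v i))
    (hvnl : ¬∃ c : ℝ, ∀ u : ℝ, v ⟨n - 1, by omega⟩ u = c * u)
    (mul : ℝ × ℝ → ℝ × ℝ → ℝ × ℝ)
    (hmul : ∀ a b : ℝ × ℝ, mul a b =
      (a.1 + b.1,
        a.2 + b.2 + ∑ i : Fin n, (-1 : ℝ) ^ ((i : ℕ) + 1) * b.1 ^ ((i : ℕ) + 1) * v i a.1)) :
    ((Subgroup.closure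
        ({f : Equiv.Perm (ℝ × ℝ) | ∃ a : ℝ × ℝ, ∀ x, f x = mul a x} ∪
          {f : Equiv.Perm (ℝ × ℝ) | ∃ a : ℝ × ℝ, ∀ x, f x = mul x a}) :
        Subgroup (Equiv.Perm (ℝ × ℝ))) : Set (Equiv.Perm (ℝ × ℝ))) =
      {f : Equiv.Perm (ℝ × ℝ) | ∃ c : ℝ, ∃ p : Polynomial ℝ, p.natDegree ≤ n ∧
        ∀ x y : ℝ, f (x, y) = (x + c, y + p.eval x)} ↔
      ∃ s : Fin n → ℝ → ℝ, (∀ k, Continuous (s k)) ∧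
        ∀ x u : ℝ,
          (∑ k : Fin n, (-1 : ℝ) ^ ((k : ℕ) + 1) * x ^ ((k : ℕ) + 1) * s k u) +
            (∑ k : Fin n, (-1 : ℝ) ^ ((k : ℕ) + 1) * x ^ ((k : ℕ) + 1) * v k u) =
          ∑ k : Fin n, (-1 : ℝ) ^ ((k : ℕ) + 1) * u ^ ((k : ℕ) + 1) * v k x := by
  have hmul' : mul = Stmt15.mulF v := by
    funext a b
    rw [hmul]
    rfl
  subst hmul'
  constructor
  · intro hset
    apply Stmt15.forward n hn v hv0 hvc
    intro u
    have hmem : Stmt15.vshear u (fun x => Stmt15.Fv v u x) ∈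
        (Subgroup.closure
          ({f : Equiv.Perm (ℝ × ℝ) | ∃ a : ℝ × ℝ, ∀ x, f x = Stmt15.mulF v a x} ∪
            {f : Equiv.Perm (ℝ × ℝ) | ∃ a : ℝ × ℝ, ∀ x, f x = Stmt15.mulF v x a}) :
          Subgroup (Equiv.Perm (ℝ × ℝ))) := by
      apply Subgroup.subset_closure
      right
      refine ⟨(u, 0), fun z => ?_⟩
      simp only [Stmt15.vshear_apply, Stmt15.mulF]
      exact Prod.ext rfl (by simp)
    have hmem' : Stmt15.vshear u (fun x => Stmt15.Fv v u x) ∈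
        ((Subgroup.closure
          ({f : Equiv.Perm (ℝ × ℝ) | ∃ a : ℝ × ℝ, ∀ x, f x = Stmt15.mulF v a x} ∪
            {f : Equiv.Perm (ℝ × ℝ) | ∃ a : ℝ × ℝ, ∀ x, f x = Stmt15.mulF v x a}) :
          Subgroup (Equiv.Perm (ℝ × ℝ))) : Set (Equiv.Perm (ℝ × ℝ))) := hmem
    rw [hset] at hmem'
    obtain ⟨c, p, hdeg, hp⟩ := hmem'
    refine ⟨p, hdeg, fun x => ?_⟩
    have := hp x 0
    simp only [Stmt15.vshear_apply] at this
    have h2 := congrArg Prod.snd this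
    simpa using h2
  · rintro ⟨s, _hsc, hs⟩
    exact Stmt15.backward n hn v hv0 (hvc _) hvnl s hs
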